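/- The element M_t is primitive for the coproduct Δ (i.e. the reduced coproduct vanishes on M_t) if and only if t is ⋋-irreducible, for any planar binary rooted tree t. -/

import Mathlib

open Classical

/-- Planar binary rooted trees. `leaf` is the unique tree `|` with one leaf. -/
inductive PBT : Type
  | leaf : PBT
  | node : PBT → PBT → PBT
  deriving DecidableEq

/-- Number of leaves of a planar binary rooted tree. -/
def leavesCount : PBT → ℕ
  | .leaf => 1
  | .node l r => leavesCount l + leavesCount r

/-- Graft the tree `w` onto the leftmost (first) leaf of `t`. -/
def graft1 : PBT → PBT → PBT
  | .leaf, w => w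
  | .node l r, w => .node (graft1 l w) r

/-- The product `t ⋋ w := w ∘₁ (t ∨ |)`. -/
def lprod (t w : PBT) : PBT := graft1 w (.node t .leaf)

/-- A tree is `⋋`-irreducible if it is not a product of two (nonempty) trees. -/
def Irr (t : PBT) : Prop := ¬ ∃ u w : PBT, t = lprod u w

/-- One covering move of the Tamari order: a right rotation
`(a ∨ b) ∨ c ↦ a ∨ (b ∨ c)` applied at some internal node. -/
inductive TStep : PBT → PBT → Prop
  | rot (a b c : PBT) : TStep (.node (.node a b) c) (.node a (.node b c))
  | left {a a' : PBT} (c : PBT) : TStep a a' → TStep (.node a c) (.node a' c)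
  | right (a : PBT) {c c' : PBT} : TStep c c' → TStep (.node a c) (.node a c')

/-- The Tamari order on planar binary rooted trees: the reflexive transitive
closure of the rotation moves. -/
def tle : PBT → PBT → Prop := Relation.ReflTransGen TStep

/-- `∨` extended to trees-with-unit, the unit (`none`) acting as a unit. -/
def ovee : Option PBT → Option PBT → Option PBT
  | none, b => b
  | a, none => a
  | some t, some w => some (PBT.node t w)

/-- The coproduct on trees (with values in the free module on pairs of
trees-with-unit): `Δ(t ∨ w) = Σ t₍₁₎ ⊗ (t₍₂₎ ∨ w) + Σ (t ∨ w₍₁₎) ⊗ w₍₂₎ − t ⊗ w`. -/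
noncomputable def D0 : PBT → ((Option PBT × Option PBT) →₀ ℤ)
  | .leaf =>
      Finsupp.single (none, some PBT.leaf) 1 + Finsupp.single (some PBT.leaf, none) 1
  | .node t w =>
      ((D0 t).sum fun p a => a • Finsupp.single (p.1, ovee p.2 (some w)) 1) +
      ((D0 w).sum fun p a => a • Finsupp.single (ovee (some t) p.1, p.2) 1) -
      Finsupp.single (some t, some w) 1

/-- The coproduct `Δ` on the vector space spanned by trees and the unit:
`Δ(1) = 1 ⊗ 1` and on trees it is given by `D0`. -/
noncomputable def D : Option PBT → ((Option PBT × Option PBT) →₀ ℤ)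
  | none => Finsupp.single (none, none) 1
  | some t => D0 t

/-- The linear extension of the coproduct `Δ`. -/
noncomputable def Dhat (f : Option PBT →₀ ℤ) : (Option PBT × Option PBT) →₀ ℤ :=
  f.sum fun x a => a • D x

section Aux

open PBT

lemma nL_pos (s : PBT) : 1 ≤ leavesCount s := by
  induction s with
  | leaf => simp [leavesCount]
  | node a b ha hb => simp [leavesCount]; omega

lemma tstep_nL {s s' : PBT} (h : TStep s s') : leavesCount s = leavesCount s' := by
  induction h with
  | rot a b c => simp [leavesCount]; omega
  | left c h ih => simp [leavesCount, ih]
  | right a h ih => simp [leavesCount, ih]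

lemma tle_nL {s s' : PBT} (h : tle s s') : leavesCount s = leavesCount s' := by
  induction h with
  | refl => rfl
  | tail _ h ih => exact ih.trans (tstep_nL h)

/-- rank function, strictly increasing along Tamari steps -/
def wt : PBT → ℕ
  | .leaf => 0
  | .node a b => wt a + wt b + leavesCount b

lemma tstep_wt {s s' : PBT} (h : TStep s s') : wt s < wt s' := by
  induction h with
  | rot a b c => simp [wt, leavesCount]; have := nL_pos c; omega
  | left c h ih => simp [wt]; omega
  | right a h ih => simp [wt]; have := tstep_nL h; omega

lemma tle_wt {s s' : PBT} (h : tle s s') : wt s ≤ wt s' := by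
  induction h with
  | refl => exact le_refl _
  | tail _ h ih => exact ih.trans (tstep_wt h).le

lemma tle_wt_eq {s s' : PBT} (h : tle s s') (hw : wt s' ≤ wt s) : s = s' := by
  cases (Relation.ReflTransGen.cases_head h) with
  | inl e => exact e
  | inr e =>
    obtain ⟨c, hc, hcs⟩ := e
    exact absurd (lt_of_lt_of_le (tstep_wt hc) (tle_wt hcs)) (by omega)

lemma tle_antisymm {s s' : PBT} (h : tle s s') (h' : tle s' s) : s = s' :=
  tle_wt_eq h (tle_wt h')

lemma tle_refl (s : PBT) : tle s s := Relation.ReflTransGen.refl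

lemma tle_trans {a b c : PBT} (h : tle a b) (h' : tle b c) : tle a c :=
  Relation.ReflTransGen.trans h h'

lemma tle_node_left {a a' : PBT} (c : PBT) (h : tle a a') : tle (node a c) (node a' c) :=
  Relation.ReflTransGen.lift (fun x => node x c) (fun _ _ hh => TStep.left c hh) _ _ h

lemma tle_node_right (a : PBT) {c c' : PBT} (h : tle c c') : tle (node a c) (node a c') :=
  Relation.ReflTransGen.lift (fun x => node a x) (fun _ _ hh => TStep.right a hh) _ _ h

lemma tle_node {a a' c c' : PBT} (h : tle a a') (h' : tle c c') :
    tle (node a c) (node a' c') :=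
  tle_trans (tle_node_left c h) (tle_node_right a' h')

end Aux
section Aux2
open PBT

lemma nL_graft1 (w X : PBT) : leavesCount (graft1 w X) = leavesCount w + leavesCount X - 1 := by
  induction w with
  | leaf => simp [graft1, leavesCount]
  | node a b ha hb =>
    simp [graft1, leavesCount, ha]
    have := nL_pos a; have := nL_pos X; omega

lemma nL_lprod (u w : PBT) : leavesCount (lprod u w) = leavesCount u + leavesCount w := by
  simp [lprod, nL_graft1, leavesCount]
  have := nL_pos w; omega

lemma lprod_leaf (u : PBT) : lprod u leaf = node u leaf := rfl

lemma lprod_node (u x y : PBT) : lprod u (node x y) = node (lprod u x) y := rfl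

/-- graft1 is monotone in the grafted argument -/
lemma tstep_graft1_right {x y : PBT} (w : PBT) (h : TStep x y) :
    TStep (graft1 w x) (graft1 w y) := by
  induction w with
  | leaf => simpa [graft1]
  | node a b ha hb => exact TStep.left b ha

lemma tle_graft1_right {x y : PBT} (w : PBT) (h : tle x y) :
    tle (graft1 w x) (graft1 w y) :=
  Relation.ReflTransGen.lift (fun z => graft1 w z) (fun _ _ hh => tstep_graft1_right w hh) _ _ h

/-- graft1 is monotone in the host argument -/
lemma tstep_graft1_left {w w' : PBT} (Z : PBT) (h : TStep w w') :
    TStep (graft1 w Z) (graft1 w' Z) := by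
  induction h with
  | rot a b c => exact TStep.rot (graft1 a Z) b c
  | left c h ih => exact TStep.left c ih
  | right a h ih => exact TStep.right (graft1 a Z) h

lemma tle_graft1_left {w w' : PBT} (Z : PBT) (h : tle w w') :
    tle (graft1 w Z) (graft1 w' Z) :=
  Relation.ReflTransGen.lift (fun z => graft1 z Z) (fun _ _ hh => tstep_graft1_left Z hh) _ _ h

lemma tle_lprod {u u' w w' : PBT} (h : tle u u') (h' : tle w w') :
    tle (lprod u w) (lprod u' w') := by
  unfold lprod
  exact tle_trans (tle_graft1_left _ h')
    (tle_graft1_right w' (tle_node_left _ h))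

/-- key rotation lemma: grafting `node a Z` is below `node a (graft Z)` -/
lemma tle_graft_node (w a Z : PBT) :
    tle (graft1 w (node a Z)) (node a (graft1 w Z)) := by
  induction w with
  | leaf => simp [graft1]; exact tle_refl _
  | node x y hx hy =>
    simp only [graft1]
    refine tle_trans (tle_node_left y hx) ?_
    exact Relation.ReflTransGen.single (TStep.rot a (graft1 x Z) y)

/-- splitting a tree along the path to the gap after leaf `i` -/
def spl : PBT → ℕ → Option PBT × Option PBT
  | .leaf, i => if i = 0 then (none, some .leaf) else (some .leaf, none)
  | .node a b, i =>
    if i < leavesCount a then ((spl a i).1, ovee (spl a i).2 (some b))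
    else if i = leavesCount a then (some a, some b)
    else (ovee (some a) (spl b (i - leavesCount a)).1, (spl b (i - leavesCount a)).2)

def osize : Option PBT → ℕ
  | none => 0
  | some t => leavesCount t

lemma osize_eq_zero {x : Option PBT} : osize x = 0 ↔ x = none := by
  cases x with
  | none => simp [osize]
  | some t => simp [osize]; have := nL_pos t; omega

lemma ovee_some (x : Option PBT) (b : PBT) : osize (ovee x (some b)) = osize x + leavesCount b := by
  cases x <;> simp [ovee, osize, leavesCount]

lemma some_ovee (a : PBT) (x : Option PBT) : osize (ovee (some a) x) = leavesCount a + osize x := by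
  cases x <;> simp [ovee, osize, leavesCount]

lemma spl_sizes (s : PBT) : ∀ i, i ≤ leavesCount s →
    osize (spl s i).1 = i ∧ osize (spl s i).2 = leavesCount s - i := by
  induction s with
  | leaf =>
    intro i hi
    simp only [leavesCount] at hi
    interval_cases i <;> simp [spl, osize, leavesCount]
  | node a b ha hb =>
    intro i hi
    simp only [leavesCount] at hi
    by_cases h1 : i < leavesCount a
    · obtain ⟨e1, e2⟩ := ha i h1.le
      simp [spl, h1, e1, ovee_some, e2, leavesCount]
      omega
    · by_cases h2 : i = leavesCount a
      · simp [spl, h1, h2, osize, leavesCount]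
      · have h3 : i - leavesCount a ≤ leavesCount b := by omega
        obtain ⟨e1, e2⟩ := hb _ h3
        simp [spl, h1, h2, some_ovee, e1, e2, leavesCount]
        omega

lemma spl_zero (s : PBT) : spl s 0 = (none, some s) := by
  induction s with
  | leaf => simp [spl]
  | node a b ha hb =>
    have h0 : 0 < leavesCount a := nL_pos a
    simp [spl, h0, ha, ovee]

lemma spl_last (s : PBT) : spl s (leavesCount s) = (some s, none) := by
  induction s with
  | leaf => simp [spl, leavesCount]
  | node a b ha hb =>
    have hb1 := nL_pos b
    have h1 : ¬ (leavesCount a + leavesCount b < leavesCount a) := by omega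
    have h2 : ¬ (leavesCount a + leavesCount b = leavesCount a) := by omega
    simp [spl, leavesCount, h1, h2, hb, ovee]
    omega

lemma spl_lprod (u w : PBT) : spl (lprod u w) (leavesCount u) = (some u, some w) := by
  induction w with
  | leaf =>
    rw [lprod_leaf]
    simp [spl, lt_irrefl]
  | node x y hx hy =>
    rw [lprod_node]
    have h1 : leavesCount u < leavesCount (lprod u x) := by
      rw [nL_lprod]; have := nL_pos x; omega
    simp [spl, h1, hx, ovee]

end Aux2
section Aux3
open PBT

def otle : Option PBT → Option PBT → Prop
  | none, none => True
  | some a, some b => tle a b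
  | _, _ => False

lemma otle_refl (x : Option PBT) : otle x x := by
  cases x <;> simp [otle, tle_refl]

lemma otle_some {a b : PBT} (h : tle a b) : otle (some a) (some b) := h

lemma otle_trans {x y z : Option PBT} (h : otle x y) (h' : otle y z) : otle x z := by
  cases x <;> cases y <;> cases z <;> simp [otle] at * <;> exact tle_trans h h'

lemma otle_ovee {x x' y y' : Option PBT} (h : otle x x') (h' : otle y y') :
    otle (ovee x y) (ovee x' y') := by
  cases x <;> cases x' <;> cases y <;> cases y' <;>
    simp [otle, ovee] at * <;> first
      | exact h | exact h' | exact tle_node h h'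

lemma tle_single {a b : PBT} (h : TStep a b) : tle a b := Relation.ReflTransGen.single h

lemma osize_spl_snd_some {s : PBT} {i : ℕ} (hi : i ≤ leavesCount s) (hne : i ≠ leavesCount s) :
    ∃ x, (spl s i).2 = some x := by
  have := (spl_sizes s i hi).2
  cases e : (spl s i).2 with
  | none => rw [e] at this; simp [osize] at this; omega
  | some x => exact ⟨x, rfl⟩

lemma osize_spl_fst_some {s : PBT} {i : ℕ} (hi : i ≤ leavesCount s) (hne : i ≠ 0) :
    ∃ x, (spl s i).1 = some x := by
  have := (spl_sizes s i hi).1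
  cases e : (spl s i).1 with
  | none => rw [e] at this; simp [osize] at this; omega
  | some x => exact ⟨x, rfl⟩

lemma nL_node (a b : PBT) : leavesCount (node a b) = leavesCount a + leavesCount b := rfl

lemma spl_node_lt {a : PBT} (b : PBT) {i : ℕ} (h : i < leavesCount a) :
    spl (node a b) i = ((spl a i).1, ovee (spl a i).2 (some b)) := by
  simp [spl, h]

lemma spl_node_eq (a b : PBT) : spl (node a b) (leavesCount a) = (some a, some b) := by
  simp [spl]

lemma spl_node_gt {a : PBT} (b : PBT) {i : ℕ} (h : leavesCount a < i) :
    spl (node a b) i =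
      (ovee (some a) (spl b (i - leavesCount a)).1, (spl b (i - leavesCount a)).2) := by
  have h1 : ¬ i < leavesCount a := by omega
  have h2 : ¬ i = leavesCount a := by omega
  simp [spl, h1, h2]

lemma tstep_spl {s s' : PBT} (h : TStep s s') :
    ∀ i, i ≤ leavesCount s →
      otle (spl s i).1 (spl s' i).1 ∧ otle (spl s i).2 (spl s' i).2 := by
  induction h with
  | rot a b c =>
    intro i hi
    have hp := nL_pos a; have hq := nL_pos b; have hr := nL_pos c
    simp only [nL_node] at hi
    rcases lt_trichotomy i (leavesCount a) with h1 | h1 | h1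
    · -- i < |a|
      obtain ⟨x, hx⟩ := osize_spl_snd_some (s := a) (i := i) h1.le (by omega)
      rw [spl_node_lt (a := node a b) c (by rw [nL_node]; omega),
        spl_node_lt (a := a) b h1, spl_node_lt (a := a) (node b c) h1, hx]
      exact ⟨otle_refl _, otle_some (tle_single (TStep.rot x b c))⟩
    · -- i = |a|
      subst h1
      rw [spl_node_lt (a := node a b) c (by rw [nL_node]; omega),
        spl_node_eq a b, spl_node_eq a (node b c)]
      exact ⟨otle_some (tle_refl a), otle_refl _⟩
    · rcases lt_trichotomy i (leavesCount a + leavesCount b) with h2 | h2 | h2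
      · -- |a| < i < |a|+|b|
        have hj2 : i - leavesCount a < leavesCount b := by omega
        obtain ⟨v, hv⟩ := osize_spl_fst_some (s := b) (i := i - leavesCount a) hj2.le (by omega)
        obtain ⟨y, hy⟩ := osize_spl_snd_some (s := b) (i := i - leavesCount a) hj2.le (by omega)
        rw [spl_node_lt (a := node a b) c (by rw [nL_node]; omega),
          spl_node_gt (a := a) b h1, spl_node_gt (a := a) (node b c) h1,
          spl_node_lt (a := b) c hj2, hv, hy]
        exact ⟨otle_refl _, otle_refl _⟩
      · -- i = |a|+|b|
        have e1 : i = leavesCount (node a b) := by rw [nL_node]; omega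
        subst e1
        rw [spl_node_eq (node a b) c, spl_node_gt (a := a) (node b c) h1]
        have e2 : leavesCount (node a b) - leavesCount a = leavesCount b := by
          rw [nL_node]; omega
        rw [e2, spl_node_eq b c]
        exact ⟨otle_refl _, otle_refl _⟩
      · -- i > |a|+|b|
        have hk2 : i - (leavesCount a + leavesCount b) ≤ leavesCount c := by omega
        obtain ⟨z, hz⟩ :=
          osize_spl_fst_some (s := c) (i := i - (leavesCount a + leavesCount b)) hk2 (by omega)
        rw [spl_node_gt (a := node a b) c (by rw [nL_node]; omega),
          spl_node_gt (a := a) (node b c) h1,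
          spl_node_gt (a := b) c (show leavesCount b < i - leavesCount a by omega)]
        have e3 : i - leavesCount (node a b) = i - (leavesCount a + leavesCount b) := by
          rw [nL_node]
        have e4 : i - leavesCount a - leavesCount b = i - (leavesCount a + leavesCount b) := by
          omega
        rw [e3, e4, hz]
        exact ⟨otle_some (tle_single (TStep.rot a b z)), otle_refl _⟩
  | @left a a' c h ih =>
    intro i hi
    have hnl : leavesCount a = leavesCount a' := tstep_nL h
    simp only [nL_node] at hi
    rcases lt_trichotomy i (leavesCount a) with h1 | h1 | h1
    · obtain ⟨o1, o2⟩ := ih i h1.le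
      rw [spl_node_lt (a := a) c h1, spl_node_lt (a := a') c (by omega)]
      exact ⟨o1, otle_ovee o2 (otle_refl _)⟩
    · subst h1
      rw [spl_node_eq a c, hnl, spl_node_eq a' c]
      exact ⟨otle_some (tle_single h), otle_some (tle_refl c)⟩
    · rw [spl_node_gt (a := a) c h1, spl_node_gt (a := a') c (by omega), ← hnl]
      exact ⟨otle_ovee (otle_some (tle_single h)) (otle_refl _), otle_refl _⟩
  | @right a c c' h ih =>
    intro i hi
    simp only [nL_node] at hi
    rcases lt_trichotomy i (leavesCount a) with h1 | h1 | h1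
    · rw [spl_node_lt (a := a) c h1, spl_node_lt (a := a) c' h1]
      exact ⟨otle_refl _, otle_ovee (otle_refl _) (otle_some (tle_single h))⟩
    · subst h1
      rw [spl_node_eq a c, spl_node_eq a c']
      exact ⟨otle_some (tle_refl a), otle_some (tle_single h)⟩
    · obtain ⟨o1, o2⟩ := ih (i - leavesCount a) (by omega)
      rw [spl_node_gt (a := a) c h1, spl_node_gt (a := a) c' h1]
      exact ⟨otle_ovee (otle_refl _) o1, o2⟩

lemma tle_spl {s s' : PBT} (h : tle s s') (i : ℕ) (hi : i ≤ leavesCount s) :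
    otle (spl s i).1 (spl s' i).1 ∧ otle (spl s i).2 (spl s' i).2 := by
  induction h with
  | refl => exact ⟨otle_refl _, otle_refl _⟩
  | @tail b c hb hc ih =>
    have hb' : i ≤ leavesCount b := by rw [← tle_nL hb]; exact hi
    obtain ⟨o1, o2⟩ := tstep_spl hc i hb'
    exact ⟨otle_trans ih.1 o1, otle_trans ih.2 o2⟩

lemma tle_lprod_node (a c : PBT) : tle (lprod a c) (node a c) := by
  induction c with
  | leaf => rw [lprod_leaf]; exact tle_refl _
  | node x y hx hy =>
    rw [lprod_node]
    exact tle_trans (tle_node_left y hx) (tle_single (TStep.rot a x y))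

lemma spl_min (s : PBT) : ∀ i u w, i ≤ leavesCount s → spl s i = (some u, some w) →
    tle (lprod u w) s := by
  induction s with
  | leaf =>
    intro i u w hi he
    simp only [leavesCount] at hi
    interval_cases i <;> simp [spl] at he
  | node a c ha hc =>
    intro i u w hi he
    simp only [nL_node] at hi
    rcases lt_trichotomy i (leavesCount a) with h1 | h1 | h1
    · obtain ⟨x, hx⟩ := osize_spl_snd_some (s := a) (i := i) h1.le (by omega)
      rw [spl_node_lt c h1, hx, Prod.mk.injEq] at he
      obtain ⟨he1, he2⟩ := he
      simp only [ovee, Option.some.injEq] at he2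
      subst he2
      have hai : spl a i = (some u, some x) := by rw [← he1, ← hx]
      rw [lprod_node]
      exact tle_node_left c (ha i u x h1.le hai)
    · subst h1
      rw [spl_node_eq a c, Prod.mk.injEq, Option.some.injEq, Option.some.injEq] at he
      obtain ⟨he1, he2⟩ := he
      subst he1; subst he2
      exact tle_lprod_node a c
    · have hj2 : i - leavesCount a ≤ leavesCount c := by omega
      obtain ⟨v, hv⟩ := osize_spl_fst_some (s := c) (i := i - leavesCount a) hj2 (by omega)
      rw [spl_node_gt c h1, hv, Prod.mk.injEq] at he
      obtain ⟨he1, he2⟩ := he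
      simp only [ovee, Option.some.injEq] at he1
      subst he1
      have hcv : spl c (i - leavesCount a) = (some v, some w) := by rw [← hv, ← he2]
      have hvw : tle (lprod v w) c := hc _ v w hj2 hcv
      have s1 : tle (lprod (node a v) w) (graft1 w (node a (node v leaf))) := by
        unfold lprod
        exact tle_graft1_right w (tle_single (TStep.rot a v leaf))
      have s2 : tle (graft1 w (node a (node v leaf))) (node a (graft1 w (node v leaf))) :=
        tle_graft_node w a (node v leaf)
      have s3 : tle (node a (lprod v w)) (node a c) := tle_node_right a hvw
      exact tle_trans s1 (tle_trans s2 s3)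

end Aux3
section Aux4
open PBT

def treesN : ℕ → Finset PBT
  | 0 => {PBT.leaf}
  | (m+1) => (Finset.range (m+1)).attach.biUnion fun k =>
      ((treesN k.1) ×ˢ (treesN (m - k.1))).image fun p => PBT.node p.1 p.2
  decreasing_by
    all_goals (have := k.2; simp only [Finset.mem_range] at this; omega)

lemma mem_treesN : ∀ s : PBT, s ∈ treesN (leavesCount s - 1) := by
  intro s
  induction s with
  | leaf => simp [treesN, leavesCount]
  | node a b ha hb =>
    have hpa := nL_pos a; have hpb := nL_pos b
    have e : leavesCount (node a b) - 1 = (leavesCount a + leavesCount b - 2) + 1 := by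
      rw [nL_node]; omega
    rw [e, treesN]
    rw [Finset.mem_biUnion]
    refine ⟨⟨leavesCount a - 1, ?_⟩, Finset.mem_attach _ _, ?_⟩
    · rw [Finset.mem_range]; omega
    · rw [Finset.mem_image]
      refine ⟨(a, b), ?_, rfl⟩
      rw [Finset.mem_product]
      constructor
      · exact ha
      · have e2 : leavesCount a + leavesCount b - 2 - (leavesCount a - 1) =
          leavesCount b - 1 := by omega
        rw [e2]; exact hb

def treesL (n : ℕ) : Finset PBT := treesN (n - 1)

lemma mem_treesL {s : PBT} {n : ℕ} (h : leavesCount s = n) : s ∈ treesL n := by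
  rw [treesL, ← h]; exact mem_treesN s

lemma tle_wt_lt {a b : PBT} (h : tle a b) (hne : a ≠ b) : wt a < wt b := by
  rcases lt_or_eq_of_le (tle_wt h) with h' | h'
  · exact h'
  · exact absurd (tle_wt_eq h h'.ge) hne

lemma fiber_le {s u w u0 w0 : PBT} {i : ℕ} (hi : i ≤ leavesCount s)
    (he : spl s i = (some u, some w)) (h1 : tle u0 u) (h2 : tle w0 w) :
    tle (lprod u0 w0) s :=
  tle_trans (tle_lprod h1 h2) (spl_min s i u w hi he)

lemma le_fiber {s u0 w0 : PBT} (h : tle (lprod u0 w0) s) :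
    ∃ u w, spl s (leavesCount u0) = (some u, some w) ∧ tle u0 u ∧ tle w0 w := by
  have hnl := tle_nL h
  have hw0 := nL_pos w0
  have hi : leavesCount u0 ≤ leavesCount (lprod u0 w0) := by rw [nL_lprod]; omega
  obtain ⟨o1, o2⟩ := tle_spl h (leavesCount u0) hi
  rw [spl_lprod] at o1 o2
  cases e1 : (spl s (leavesCount u0)).1 with
  | none => rw [e1] at o1; exact absurd o1 (by simp [otle])
  | some u =>
    cases e2 : (spl s (leavesCount u0)).2 with
    | none => rw [e2] at o2; exact absurd o2 (by simp [otle])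
    | some w =>
      rw [e1] at o1; rw [e2] at o2
      exact ⟨u, w, by rw [← e1, ← e2], o1, o2⟩

lemma lprod_inj {u w u' w' : PBT} (he : lprod u w = lprod u' w')
    (hn : leavesCount u = leavesCount u') : u = u' ∧ w = w' := by
  have h1 := spl_lprod u w
  have h2 := spl_lprod u' w'
  rw [← he, ← hn, h1, Prod.mk.injEq, Option.some.injEq, Option.some.injEq] at h2
  exact ⟨h2.1, h2.2⟩

end Aux4
section Aux5
open PBT Finsupp

lemma phiL_spl (t w : PBT) {i : ℕ} (hi : i ≤ leavesCount t) :
    ((spl t i).1, ovee (spl t i).2 (some w)) = spl (node t w) i := by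
  rcases lt_or_eq_of_le hi with h | h
  · rw [spl_node_lt w h]
  · subst h
    rw [spl_last, spl_node_eq]
    rfl

lemma phiR_spl (t w : PBT) {j : ℕ} (hj : j ≤ leavesCount w) :
    (ovee (some t) (spl w j).1, (spl w j).2) = spl (node t w) (leavesCount t + j) := by
  rcases Nat.eq_zero_or_pos j with h | h
  · subst h
    rw [spl_zero]
    rw [show leavesCount t + 0 = leavesCount t from rfl, spl_node_eq]
    rfl
  · rw [spl_node_gt w (show leavesCount t < leavesCount t + j by omega)]
    rw [show leavesCount t + j - leavesCount t = j by omega]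

lemma D0_eq (s : PBT) :
    D0 s = ∑ i ∈ Finset.range (leavesCount s + 1), Finsupp.single (spl s i) (1 : ℤ) := by
  induction s with
  | leaf =>
    rw [show leavesCount leaf = 1 from rfl]
    rw [Finset.sum_range_succ, Finset.sum_range_one]
    rw [show spl leaf 0 = (none, some leaf) from rfl,
      show spl leaf 1 = (some leaf, none) by simp [spl]]
    rfl
  | node t w iht ihw =>
    have hL : ((D0 t).sum fun p a => a • Finsupp.single (p.1, ovee p.2 (some w)) (1:ℤ)) =
        Finsupp.mapDomain (fun p : Option PBT × Option PBT => (p.1, ovee p.2 (some w)))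
          (D0 t) := by
      rw [Finsupp.mapDomain]
      exact Finsupp.sum_congr (fun p _ => by rw [Finsupp.smul_single', mul_one])
    have hR : ((D0 w).sum fun p a => a • Finsupp.single (ovee (some t) p.1, p.2) (1:ℤ)) =
        Finsupp.mapDomain (fun p : Option PBT × Option PBT => (ovee (some t) p.1, p.2))
          (D0 w) := by
      rw [Finsupp.mapDomain]
      exact Finsupp.sum_congr (fun p _ => by rw [Finsupp.smul_single', mul_one])
    rw [show D0 (node t w) = ((D0 t).sum fun p a => a • Finsupp.single (p.1, ovee p.2 (some w)) (1:ℤ)) +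
      ((D0 w).sum fun p a => a • Finsupp.single (ovee (some t) p.1, p.2) (1:ℤ)) -
      Finsupp.single (some t, some w) (1:ℤ) from rfl]
    rw [hL, hR, iht, ihw]
    rw [Finsupp.mapDomain_finset_sum, Finsupp.mapDomain_finset_sum]
    simp only [Finsupp.mapDomain_single]
    have eL : ∀ i ∈ Finset.range (leavesCount t + 1),
        Finsupp.single ((spl t i).1, ovee (spl t i).2 (some w)) (1:ℤ) =
          Finsupp.single (spl (node t w) i) (1:ℤ) := by
      intro i hi
      rw [Finset.mem_range] at hi
      rw [phiL_spl t w (by omega)]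
    have eR : ∀ j ∈ Finset.range (leavesCount w + 1),
        Finsupp.single (ovee (some t) (spl w j).1, (spl w j).2) (1:ℤ) =
          Finsupp.single (spl (node t w) (leavesCount t + j)) (1:ℤ) := by
      intro j hj
      rw [Finset.mem_range] at hj
      rw [phiR_spl t w (by omega)]
    rw [Finset.sum_congr rfl eL, Finset.sum_congr rfl eR]
    set F : ℕ → ((Option PBT × Option PBT) →₀ ℤ) :=
      fun i => Finsupp.single (spl (node t w) i) (1:ℤ) with hF
    have e0 : Finsupp.single (some t, some w) (1:ℤ) = F (leavesCount t) := by
      simp only [hF, spl_node_eq]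
    rw [e0]
    rw [Finset.sum_range_succ' (fun j => F (leavesCount t + j)) (leavesCount w)]
    rw [show leavesCount t + 0 = leavesCount t from rfl]
    rw [show leavesCount (node t w) + 1 = (leavesCount t + 1) + leavesCount w from by
      rw [nL_node]; omega]
    rw [Finset.sum_range_add F (leavesCount t + 1) (leavesCount w)]
    have : ∀ i ∈ Finset.range (leavesCount w),
        F (leavesCount t + (i + 1)) = F (leavesCount t + 1 + i) := by
      intro i _; rw [show leavesCount t + (i+1) = leavesCount t + 1 + i by omega]
    rw [Finset.sum_congr rfl this]
    abel

end Aux5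
section Aux6
open PBT

lemma spl_snd_none (s : PBT) : ∀ i, leavesCount s ≤ i → (spl s i).2 = none := by
  induction s with
  | leaf =>
    intro i hi
    simp only [leavesCount] at hi
    have h0 : i ≠ 0 := by omega
    simp [spl, h0]
  | node a b ha hb =>
    intro i hi
    rw [nL_node] at hi
    have hpa := nL_pos a; have hpb := nL_pos b
    rw [spl_node_gt b (by omega)]
    exact hb _ (by omega)

lemma osize_some (u : PBT) : osize (some u) = leavesCount u := rfl

lemma inner_eval (u0 w0 s : PBT) (c : ℤ) :
    (∑ p ∈ treesL (leavesCount u0) ×ˢ treesL (leavesCount w0),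
        if (tle u0 p.1 ∧ tle w0 p.2) ∧ spl s (leavesCount p.1) = (some p.1, some p.2)
          then c else 0) =
      if tle (lprod u0 w0) s then c else 0 := by
  by_cases hfib : tle (lprod u0 w0) s
  · rw [if_pos hfib]
    have hnls : leavesCount s = leavesCount u0 + leavesCount w0 := by
      rw [← tle_nL hfib, nL_lprod]
    obtain ⟨u, w, hspl, hu, hw⟩ := le_fiber hfib
    have hi : leavesCount u0 ≤ leavesCount s := by have := nL_pos w0; omega
    have hszs := spl_sizes s (leavesCount u0) hi
    rw [hspl] at hszs
    have hnu : leavesCount u = leavesCount u0 := by rw [← osize_some u, hszs.1]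
    have hnw : leavesCount w = leavesCount w0 := by
      rw [← osize_some w, hszs.2]; omega
    rw [Finset.sum_eq_single_of_mem (u, w)
      (Finset.mem_product.2 ⟨mem_treesL hnu, mem_treesL hnw⟩)]
    · rw [if_pos]
      refine ⟨⟨hu, hw⟩, ?_⟩
      rw [hnu]
      exact hspl
    · intro q hq hne
      rw [if_neg]
      rintro ⟨⟨h1, h2⟩, h3⟩
      apply hne
      have hq1 : leavesCount q.1 = leavesCount u0 := by rw [← tle_nL h1]
      rw [hq1, hspl, Prod.mk.injEq, Option.some.injEq, Option.some.injEq] at h3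
      exact Prod.ext_iff.2 ⟨h3.1.symm, h3.2.symm⟩
  · rw [if_neg hfib]
    apply Finset.sum_eq_zero
    intro q hq
    rw [if_neg]
    rintro ⟨⟨h1, h2⟩, h3⟩
    apply hfib
    have hi : leavesCount q.1 ≤ leavesCount s := by
      by_contra hgt
      have hn := spl_snd_none s (leavesCount q.1) (by omega)
      rw [h3] at hn
      simp at hn
    exact fiber_le hi h3 h1 h2

section Mob
variable {μ : PBT → PBT → ℤ}

lemma mobius_interval
    (hμrefl : ∀ t : PBT, μ t t = 1)
    (hμzero : ∀ w t : PBT, ¬ tle w t → μ w t = 0)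
    (hμsum : ∀ w t : PBT, tle w t → w ≠ t →
      (∑ᶠ z : PBT, if tle w z ∧ tle z t then μ z t else 0) = 0)
    (r z : PBT) :
    (∑ x ∈ treesL (leavesCount z), if tle r x ∧ tle x z then μ x z else 0) =
      if r = z then 1 else 0 := by
  by_cases hrz : r = z
  · subst hrz
    rw [if_pos rfl]
    rw [Finset.sum_eq_single_of_mem r (mem_treesL rfl)]
    · simp [tle_refl, hμrefl]
    · intro x hx hne
      rw [if_neg]
      rintro ⟨h1, h2⟩
      exact hne (tle_antisymm h1 h2).symm
  · rw [if_neg hrz]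
    by_cases hle : tle r z
    · rw [← finsum_eq_finset_sum_of_support_subset _ ?hsub]
      · exact hμsum r z hle hrz
      case hsub =>
        intro x hx
        simp only [Function.mem_support] at hx
        have hc : tle r x ∧ tle x z := by
          by_contra hc
          rw [if_neg hc] at hx
          exact hx rfl
        simp only [Finset.coe_sort_coe, Finset.mem_coe]
        exact mem_treesL (tle_nL hc.2)
    · apply Finset.sum_eq_zero
      intro x hx
      rw [if_neg]
      rintro ⟨h1, h2⟩
      exact hle (tle_trans h1 h2)

lemma star
    (hμrefl : ∀ t : PBT, μ t t = 1)
    (hμzero : ∀ w t : PBT, ¬ tle w t → μ w t = 0)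
    (hμsum : ∀ w t : PBT, tle w t → w ≠ t →
      (∑ᶠ z : PBT, if tle w z ∧ tle z t then μ z t else 0) = 0)
    (t u0 w0 : PBT) :
    (∑ p ∈ treesL (leavesCount u0) ×ˢ treesL (leavesCount w0),
      if tle u0 p.1 ∧ tle w0 p.2 then
        (∑ s ∈ treesL (leavesCount t),
          if spl s (leavesCount p.1) = (some p.1, some p.2) then μ s t else 0)
      else 0) =
    if lprod u0 w0 = t then 1 else 0 := by
  have step1 : ∀ p ∈ treesL (leavesCount u0) ×ˢ treesL (leavesCount w0),
      (if tle u0 p.1 ∧ tle w0 p.2 then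
        (∑ s ∈ treesL (leavesCount t),
          if spl s (leavesCount p.1) = (some p.1, some p.2) then μ s t else 0)
      else 0) =
      ∑ s ∈ treesL (leavesCount t),
        (if (tle u0 p.1 ∧ tle w0 p.2) ∧ spl s (leavesCount p.1) = (some p.1, some p.2)
          then μ s t else 0) := by
    intro p _
    by_cases hg : tle u0 p.1 ∧ tle w0 p.2
    · rw [if_pos hg]
      refine Finset.sum_congr rfl fun s _ => ?_
      by_cases hs : spl s (leavesCount p.1) = (some p.1, some p.2)
      · rw [if_pos hs, if_pos ⟨hg, hs⟩]
      · rw [if_neg hs, if_neg (fun hc => hs hc.2)]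
    · rw [if_neg hg]
      symm
      apply Finset.sum_eq_zero
      intro s _
      rw [if_neg (fun hc => hg hc.1)]
  rw [Finset.sum_congr rfl step1]
  rw [Finset.sum_comm]
  have step3 : ∀ s ∈ treesL (leavesCount t),
      (∑ p ∈ treesL (leavesCount u0) ×ˢ treesL (leavesCount w0),
        (if (tle u0 p.1 ∧ tle w0 p.2) ∧ spl s (leavesCount p.1) = (some p.1, some p.2)
          then μ s t else 0)) =
      (if tle (lprod u0 w0) s ∧ tle s t then μ s t else 0) := by
    intro s _
    rw [inner_eval u0 w0 s (μ s t)]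
    by_cases hst : tle s t
    · by_cases hfib : tle (lprod u0 w0) s
      · rw [if_pos hfib, if_pos ⟨hfib, hst⟩]
      · rw [if_neg hfib, if_neg (fun hc => hfib hc.1)]
    · rw [hμzero s t hst]
      simp
  rw [Finset.sum_congr rfl step3]
  exact mobius_interval hμrefl hμzero hμsum (lprod u0 w0) t

end Mob
end Aux6
section Aux7
open PBT

noncomputable def Phi (v : PBT →₀ ℤ) : (Option PBT × Option PBT) →₀ ℤ :=
  v.sum fun s a => a • (∑ i ∈ Finset.Ico 1 (leavesCount s), Finsupp.single (spl s i) (1 : ℤ))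

lemma D0_split (s : PBT) :
    D0 s - (Finsupp.single (spl s 0) (1:ℤ) + Finsupp.single (spl s (leavesCount s)) (1:ℤ)) =
      ∑ i ∈ Finset.Ico 1 (leavesCount s), Finsupp.single (spl s i) (1 : ℤ) := by
  have hn := nL_pos s
  rw [D0_eq, Finset.range_eq_Ico,
    Finset.sum_eq_sum_Ico_succ_bot (by omega : 0 < leavesCount s + 1),
    Finset.sum_Ico_succ_top (by omega : 1 ≤ leavesCount s)]
  abel

lemma main_iff (v : PBT →₀ ℤ) :
    (Dhat (Finsupp.mapDomain some v) =
        Finsupp.mapDomain (fun y => ((none : Option PBT), y)) (Finsupp.mapDomain some v) +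
        Finsupp.mapDomain (fun y => (y, (none : Option PBT))) (Finsupp.mapDomain some v)) ↔
      Phi v = 0 := by
  have h1 : Dhat (Finsupp.mapDomain some v) = v.sum fun s a => a • D0 s := by
    rw [Dhat]
    rw [Finsupp.sum_mapDomain_index (fun b => zero_smul ℤ (D b))
      (fun b m₁ m₂ => add_smul m₁ m₂ (D b))]
    rfl
  have h2 : Finsupp.mapDomain (fun y => ((none : Option PBT), y)) (Finsupp.mapDomain some v) =
      v.sum fun s a => a • Finsupp.single (spl s 0) (1:ℤ) := by
    rw [← Finsupp.mapDomain_comp, Finsupp.mapDomain]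
    refine Finsupp.sum_congr fun s _ => ?_
    rw [Finsupp.smul_single', mul_one, spl_zero]
    rfl
  have h3 : Finsupp.mapDomain (fun y => (y, (none : Option PBT))) (Finsupp.mapDomain some v) =
      v.sum fun s a => a • Finsupp.single (spl s (leavesCount s)) (1:ℤ) := by
    rw [← Finsupp.mapDomain_comp, Finsupp.mapDomain]
    refine Finsupp.sum_congr fun s _ => ?_
    rw [Finsupp.smul_single', mul_one, spl_last]
    rfl
  rw [h1, h2, h3, ← sub_eq_zero]
  have h4 : ((v.sum fun s a => a • D0 s) -
      ((v.sum fun s a => a • Finsupp.single (spl s 0) (1:ℤ)) +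
        (v.sum fun s a => a • Finsupp.single (spl s (leavesCount s)) (1:ℤ)))) = Phi v := by
    rw [← Finsupp.sum_add]
    rw [← Finsupp.sum_sub]
    refine Finsupp.sum_congr fun s _ => ?_
    rw [← smul_add, ← smul_sub, D0_split]
  rw [h4]

section WithMu
variable {μ : PBT → PBT → ℤ} {t : PBT}

lemma Phi_apply
    (hμzero : ∀ w t : PBT, ¬ tle w t → μ w t = 0)
    (v : PBT →₀ ℤ) (hv : ∀ s, v s = μ s t) (q : Option PBT × Option PBT) :
    Phi v q = ∑ s ∈ treesL (leavesCount t),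
      (μ s t) * ((Finset.Ico 1 (leavesCount s)).sum fun i => if spl s i = q then (1:ℤ) else 0) := by
  have hsub : v.support ⊆ treesL (leavesCount t) := by
    intro s hs
    rw [Finsupp.mem_support_iff, hv] at hs
    have : tle s t := by
      by_contra hc
      exact hs (hμzero s t hc)
    exact mem_treesL (tle_nL this)
  rw [Phi, Finsupp.sum_of_support_subset v hsub _ (fun s _ => by rw [zero_smul])]
  rw [Finsupp.finset_sum_apply]
  refine Finset.sum_congr rfl fun s _ => ?_
  rw [hv, Finsupp.smul_apply, Finsupp.finset_sum_apply, smul_eq_mul]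
  congr 1
  refine Finset.sum_congr rfl fun i _ => ?_
  rw [Finsupp.single_apply]

lemma Phi_coeff_good
    (hμzero : ∀ w t : PBT, ¬ tle w t → μ w t = 0)
    (v : PBT →₀ ℤ) (hv : ∀ s, v s = μ s t) (u w : PBT)
    (hsz : leavesCount u + leavesCount w = leavesCount t) :
    Phi v (some u, some w) = ∑ s ∈ treesL (leavesCount t),
      (if spl s (leavesCount u) = (some u, some w) then μ s t else 0) := by
  rw [Phi_apply hμzero v hv]
  refine Finset.sum_congr rfl fun s _ => ?_
  by_cases hμ0 : μ s t = 0
  · simp [hμ0]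
  · have hst : tle s t := by
      by_contra hc
      exact hμ0 (hμzero s t hc)
    have hnls : leavesCount s = leavesCount t := tle_nL hst
    have hupos := nL_pos u
    have hwpos := nL_pos w
    by_cases hq : spl s (leavesCount u) = (some u, some w)
    · rw [if_pos hq]
      rw [Finset.sum_eq_single_of_mem (leavesCount u)
        (Finset.mem_Ico.2 ⟨hupos, by omega⟩)]
      · rw [if_pos hq, mul_one]
      · intro i hi hne
        rw [Finset.mem_Ico] at hi
        rw [if_neg]
        intro hc
        apply hne
        have := (spl_sizes s i (by omega)).1
        rw [hc] at this
        rw [← this, osize_some]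
    · rw [if_neg hq]
      rw [Finset.sum_eq_zero, mul_zero]
      intro i hi
      rw [Finset.mem_Ico] at hi
      rw [if_neg]
      intro hc
      apply hq
      have := (spl_sizes s i (by omega)).1
      rw [hc, osize_some] at this
      rw [this]
      exact hc

lemma Phi_coeff_bad
    (hμzero : ∀ w t : PBT, ¬ tle w t → μ w t = 0)
    (v : PBT →₀ ℤ) (hv : ∀ s, v s = μ s t) (q : Option PBT × Option PBT)
    (hq : ¬ ∃ u w : PBT, q = (some u, some w) ∧
        leavesCount u + leavesCount w = leavesCount t) :
    Phi v q = 0 := by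
  rw [Phi_apply hμzero v hv]
  apply Finset.sum_eq_zero
  intro s _
  by_cases hμ0 : μ s t = 0
  · rw [hμ0, zero_mul]
  · have hst : tle s t := by
      by_contra hc
      exact hμ0 (hμzero s t hc)
    have hnls : leavesCount s = leavesCount t := tle_nL hst
    rw [Finset.sum_eq_zero, mul_zero]
    intro i hi
    rw [Finset.mem_Ico] at hi
    rw [if_neg]
    intro hc
    apply hq
    obtain ⟨x, hx⟩ := osize_spl_fst_some (s := s) (i := i) (by omega) (by omega)
    obtain ⟨y, hy⟩ := osize_spl_snd_some (s := s) (i := i) (by omega) (by omega)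
    obtain ⟨e1, e2⟩ := spl_sizes s i (by omega)
    rw [hx, osize_some] at e1
    rw [hy, osize_some] at e2
    refine ⟨x, y, ?_, by omega⟩
    rw [← hc, ← hx, ← hy]

end WithMu
end Aux7
section Aux8
open PBT

def nuF (μ : PBT → PBT → ℤ) (t : PBT) (p : PBT × PBT) : ℤ :=
  ∑ s ∈ treesL (leavesCount t),
    if spl s (leavesCount p.1) = (some p.1, some p.2) then μ s t else 0

variable {μ : PBT → PBT → ℤ}

lemma star'
    (hμrefl : ∀ t : PBT, μ t t = 1)
    (hμzero : ∀ w t : PBT, ¬ tle w t → μ w t = 0)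
    (hμsum : ∀ w t : PBT, tle w t → w ≠ t →
      (∑ᶠ z : PBT, if tle w z ∧ tle z t then μ z t else 0) = 0)
    (t u0 w0 : PBT) :
    (∑ p ∈ treesL (leavesCount u0) ×ˢ treesL (leavesCount w0),
      if tle u0 p.1 ∧ tle w0 p.2 then nuF μ t p else 0) =
    if lprod u0 w0 = t then 1 else 0 :=
  star hμrefl hμzero hμsum t u0 w0

lemma wt_pair_lt {p q : PBT × PBT} (h1 : tle p.1 q.1) (h2 : tle p.2 q.2) (hne : q ≠ p) :
    wt p.1 + wt p.2 < wt q.1 + wt q.2 := by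
  rcases eq_or_ne p.1 q.1 with e1 | e1
  · have e2 : p.2 ≠ q.2 := by
      intro e2
      exact hne (Prod.ext_iff.2 ⟨e1.symm, e2.symm⟩)
    have := tle_wt_lt h2 e2
    rw [e1]
    omega
  · have ha := tle_wt_lt h1 e1
    have hb := tle_wt h2
    omega

lemma nu_eq_zero_of_irr
    (hμrefl : ∀ t : PBT, μ t t = 1)
    (hμzero : ∀ w t : PBT, ¬ tle w t → μ w t = 0)
    (hμsum : ∀ w t : PBT, tle w t → w ≠ t →
      (∑ᶠ z : PBT, if tle w z ∧ tle z t then μ z t else 0) = 0)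
    (t : PBT) (hIrr : Irr t) (u w : PBT) :
    nuF μ t (u, w) = 0 := by
  by_contra hne
  classical
  set G := treesL (leavesCount u) ×ˢ treesL (leavesCount w) with hG
  set S := G.filter (fun p => nuF μ t p ≠ 0 ∧ leavesCount p.1 = leavesCount u ∧
    leavesCount p.2 = leavesCount w) with hS
  have hSne : S.Nonempty := by
    refine ⟨(u, w), ?_⟩
    rw [hS, Finset.mem_filter]
    exact ⟨Finset.mem_product.2 ⟨mem_treesL rfl, mem_treesL rfl⟩, hne, rfl, rfl⟩
  obtain ⟨p, hpS, hpmax⟩ := Finset.exists_max_image S (fun p => wt p.1 + wt p.2) hSne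
  rw [hS, Finset.mem_filter] at hpS
  obtain ⟨hpG, hpf, hp1, hp2⟩ := hpS
  have hstar := star' hμrefl hμzero hμsum t p.1 p.2
  rw [hp1, hp2, ← hG] at hstar
  have hsum : (∑ q ∈ G, if tle p.1 q.1 ∧ tle p.2 q.2 then nuF μ t q else 0) = nuF μ t p := by
    rw [Finset.sum_eq_single_of_mem p hpG]
    · rw [if_pos ⟨tle_refl _, tle_refl _⟩]
    · intro q hqG hqne
      by_cases hg : tle p.1 q.1 ∧ tle p.2 q.2
      · rw [if_pos hg]
        have hq1 : leavesCount q.1 = leavesCount u := by rw [← tle_nL hg.1, hp1]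
        have hq2 : leavesCount q.2 = leavesCount w := by rw [← tle_nL hg.2, hp2]
        have hwlt := wt_pair_lt hg.1 hg.2 hqne
        by_contra hfq
        have hqS : q ∈ S := by
          rw [hS, Finset.mem_filter]
          exact ⟨hqG, hfq, hq1, hq2⟩
        exact absurd (hpmax q hqS) (by omega)
      · rw [if_neg hg]
  rw [hsum] at hstar
  apply hpf
  rw [hstar, if_neg]
  intro hc
  exact hIrr ⟨p.1, p.2, hc.symm⟩

lemma gstar
    (hμrefl : ∀ t : PBT, μ t t = 1)
    (hμzero : ∀ w t : PBT, ¬ tle w t → μ w t = 0)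
    (hμsum : ∀ w t : PBT, tle w t → w ≠ t →
      (∑ᶠ z : PBT, if tle w z ∧ tle z t then μ z t else 0) = 0)
    (u' w' : PBT) (p : PBT × PBT)
    (hp1 : leavesCount p.1 = leavesCount u') (hp2 : leavesCount p.2 = leavesCount w') :
    (∑ q ∈ treesL (leavesCount u') ×ˢ treesL (leavesCount w'),
      if tle p.1 q.1 ∧ tle p.2 q.2 then μ q.1 u' * μ q.2 w' else 0) =
    if lprod p.1 p.2 = lprod u' w' then 1 else 0 := by
  have hfact : (∑ q ∈ treesL (leavesCount u') ×ˢ treesL (leavesCount w'),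
      if tle p.1 q.1 ∧ tle p.2 q.2 then μ q.1 u' * μ q.2 w' else 0) =
      (∑ x ∈ treesL (leavesCount u'), if tle p.1 x ∧ tle x u' then μ x u' else 0) *
      (∑ y ∈ treesL (leavesCount w'), if tle p.2 y ∧ tle y w' then μ y w' else 0) := by
    rw [Finset.sum_mul_sum]
    rw [Finset.sum_product]
    refine Finset.sum_congr rfl fun x _ => Finset.sum_congr rfl fun y _ => ?_
    show (if tle p.1 x ∧ tle p.2 y then μ x u' * μ y w' else 0) =
      (if tle p.1 x ∧ tle x u' then μ x u' else 0) *
        (if tle p.2 y ∧ tle y w' then μ y w' else 0)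
    by_cases hx : tle p.1 x
    · by_cases hy : tle p.2 y
      · rw [if_pos (show tle p.1 x ∧ tle p.2 y from ⟨hx, hy⟩)]
        by_cases hxu : tle x u'
        · by_cases hyw : tle y w'
          · rw [if_pos (show tle p.1 x ∧ tle x u' from ⟨hx, hxu⟩),
              if_pos (show tle p.2 y ∧ tle y w' from ⟨hy, hyw⟩)]
          · rw [if_neg (show ¬(tle p.2 y ∧ tle y w') from fun hc => hyw hc.2), mul_zero,
              hμzero y w' hyw, mul_zero]
        · rw [if_neg (show ¬(tle p.1 x ∧ tle x u') from fun hc => hxu hc.2), zero_mul,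
            hμzero x u' hxu, zero_mul]
      · rw [if_neg (show ¬(tle p.1 x ∧ tle p.2 y) from fun hc => hy hc.2),
          if_neg (show ¬(tle p.2 y ∧ tle y w') from fun hc => hy hc.1), mul_zero]
    · rw [if_neg (show ¬(tle p.1 x ∧ tle p.2 y) from fun hc => hx hc.1),
        if_neg (show ¬(tle p.1 x ∧ tle x u') from fun hc => hx hc.1), zero_mul]
  rw [hfact]
  rw [mobius_interval hμrefl hμzero hμsum p.1 u',
    mobius_interval hμrefl hμzero hμsum p.2 w']
  by_cases e1 : p.1 = u'
  · by_cases e2 : p.2 = w'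
    · rw [if_pos e1, if_pos e2, one_mul, if_pos (by rw [e1, e2])]
    · rw [if_neg e2, mul_zero, if_neg]
      intro hc
      exact e2 (lprod_inj hc hp1).2
  · rw [if_neg e1, zero_mul, if_neg]
    intro hc
    exact e1 (lprod_inj hc hp1).1

lemma nu_eq_one_of_decomp
    (hμrefl : ∀ t : PBT, μ t t = 1)
    (hμzero : ∀ w t : PBT, ¬ tle w t → μ w t = 0)
    (hμsum : ∀ w t : PBT, tle w t → w ≠ t →
      (∑ᶠ z : PBT, if tle w z ∧ tle z t then μ z t else 0) = 0)
    (t u' w' : PBT) (hdec : t = lprod u' w') :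
    nuF μ t (u', w') = 1 := by
  classical
  set G := treesL (leavesCount u') ×ˢ treesL (leavesCount w') with hG
  set S := G.filter (fun p => (tle u' p.1 ∧ tle w' p.2) ∧
    nuF μ t p ≠ μ p.1 u' * μ p.2 w') with hS
  have hSe : S = ∅ := by
    by_contra hne
    have hSne : S.Nonempty := Finset.nonempty_of_ne_empty hne
    obtain ⟨p, hpS, hpmax⟩ := Finset.exists_max_image S (fun p => wt p.1 + wt p.2) hSne
    rw [hS, Finset.mem_filter] at hpS
    obtain ⟨hpG, ⟨hgu, hgw⟩, hpne⟩ := hpS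
    have hp1 : leavesCount p.1 = leavesCount u' := (tle_nL hgu).symm
    have hp2 : leavesCount p.2 = leavesCount w' := (tle_nL hgw).symm
    have hstar := star' hμrefl hμzero hμsum t p.1 p.2
    rw [hp1, hp2, ← hG] at hstar
    have hg := gstar hμrefl hμzero hμsum u' w' p hp1 hp2
    rw [← hG, ← hdec] at hg
    have hdiff : (∑ q ∈ G, ((if tle p.1 q.1 ∧ tle p.2 q.2 then nuF μ t q else 0) -
        (if tle p.1 q.1 ∧ tle p.2 q.2 then μ q.1 u' * μ q.2 w' else 0))) = 0 := by
      rw [Finset.sum_sub_distrib, hstar, hg, sub_self]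
    rw [Finset.sum_eq_single_of_mem p hpG ?hrest] at hdiff
    · rw [if_pos ⟨tle_refl _, tle_refl _⟩, if_pos ⟨tle_refl _, tle_refl _⟩] at hdiff
      exact hpne (sub_eq_zero.mp hdiff)
    case hrest =>
      intro q hqG hqne
      by_cases hgq : tle p.1 q.1 ∧ tle p.2 q.2
      · rw [if_pos hgq, if_pos hgq]
        have hqu : tle u' q.1 := tle_trans hgu hgq.1
        have hqw : tle w' q.2 := tle_trans hgw hgq.2
        have hwlt := wt_pair_lt hgq.1 hgq.2 hqne
        have heq : nuF μ t q = μ q.1 u' * μ q.2 w' := by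
          by_contra hc
          have hqS : q ∈ S := by
            rw [hS, Finset.mem_filter]
            exact ⟨hqG, ⟨hqu, hqw⟩, hc⟩
          exact absurd (hpmax q hqS) (by omega)
        rw [heq, sub_self]
      · rw [if_neg hgq, if_neg hgq, sub_self]
  have hval : nuF μ t (u', w') = μ u' u' * μ w' w' := by
    by_contra hc
    have hmem : (u', w') ∈ S := by
      rw [hS, Finset.mem_filter]
      exact ⟨Finset.mem_product.2 ⟨mem_treesL rfl, mem_treesL rfl⟩,
        ⟨tle_refl _, tle_refl _⟩, hc⟩
    rw [hSe] at hmem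
    exact absurd hmem (Finset.notMem_empty _)
  rw [hval, hμrefl, hμrefl, one_mul]

end Aux8
/-- `M_t` is primitive for `Δ` (the reduced coproduct vanishes on `M_t`,
i.e. `Δ(M_t) = 1 ⊗ M_t + M_t ⊗ 1`) if and only if `t` is `⋋`-irreducible. -/
theorem stmt17
    (μ : PBT → PBT → ℤ) (M : PBT → (PBT →₀ ℤ))
    (hM : ∀ t w : PBT, M t w = μ w t)
    (hμrefl : ∀ t : PBT, μ t t = 1)
    (hμzero : ∀ w t : PBT, ¬ tle w t → μ w t = 0)
    (hμsum : ∀ w t : PBT, tle w t → w ≠ t →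
      (∑ᶠ z : PBT, if tle w z ∧ tle z t then μ z t else 0) = 0)
    (t : PBT) :
    (Dhat (Finsupp.mapDomain some (M t)) =
        Finsupp.mapDomain (fun y => ((none : Option PBT), y))
          (Finsupp.mapDomain some (M t)) +
        Finsupp.mapDomain (fun y => (y, (none : Option PBT)))
          (Finsupp.mapDomain some (M t))) ↔ Irr t := by
  have hv : ∀ s, (M t) s = μ s t := fun s => hM t s
  rw [main_iff (M t)]
  constructor
  · intro hPhi
    intro hEx
    obtain ⟨u', w', hdec⟩ := hEx
    have h1 : nuF μ t (u', w') = 1 := nu_eq_one_of_decomp hμrefl hμzero hμsum t u' w' hdec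
    have hsz : leavesCount u' + leavesCount w' = leavesCount t := by
      rw [hdec, nL_lprod]
    have h2 := Phi_coeff_good hμzero (M t) hv u' w' hsz
    rw [hPhi] at h2
    rw [show (∑ s ∈ treesL (leavesCount t),
        if spl s (leavesCount u') = (some u', some w') then μ s t else 0) =
      nuF μ t (u', w') from rfl, h1] at h2
    simp at h2
  · intro hIrr
    ext q
    rw [Finsupp.coe_zero, Pi.zero_apply]
    by_cases hq : ∃ u w : PBT, q = (some u, some w) ∧
        leavesCount u + leavesCount w = leavesCount t
    · obtain ⟨u, w, hquw, hsz⟩ := hq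
      subst hquw
      rw [Phi_coeff_good hμzero (M t) hv u w hsz]
      exact nu_eq_zero_of_irr hμrefl hμzero hμsum t hIrr u w
    · exact Phi_coeff_bad hμzero (M t) hv q hq
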